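/- Let 1 < p ≤ 2, c ≥ 1/2, and define F(x, y) := (x² + y²)^{p/2} − ((x−1)² + y²)^{p/2} for x ≥ c, y ≥ 0. Then ∂_y F(x, y) ≤ 0, i.e. y ↦ F(x, y) is nonincreasing on [0, ∞) for each fixed x ≥ c. -/

import Mathlib

/-- For `1 < p ≤ 2`, `c ≥ 1/2` and `x ≥ c`, the function
`y ↦ F(x,y) = (x² + y²)^{p/2} − ((x−1)² + y²)^{p/2}` is nonincreasing on `[0, ∞)`. -/
theorem F_antitone_of_le_two (p c x : ℝ) (hp1 : 1 < p) (hp2 : p ≤ 2) (hc : 1 / 2 ≤ c)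
    (hx : c ≤ x) :
    AntitoneOn (fun y : ℝ => (x ^ 2 + y ^ 2) ^ (p / 2) - ((x - 1) ^ 2 + y ^ 2) ^ (p / 2))
      (Set.Ici (0 : ℝ)) := by
  have hx0 : (1:ℝ)/2 ≤ x := le_trans hc hx
  have hderiv : ∀ y : ℝ, 0 < y →
      HasDerivAt (fun y : ℝ => (x ^ 2 + y ^ 2) ^ (p / 2) - ((x - 1) ^ 2 + y ^ 2) ^ (p / 2))
        ((2 * y * (p / 2) * (x ^ 2 + y ^ 2) ^ (p / 2 - 1))
          - (2 * y * (p / 2) * ((x - 1) ^ 2 + y ^ 2) ^ (p / 2 - 1))) y := by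
    intro y hy
    have h1 : HasDerivAt (fun y : ℝ => x ^ 2 + y ^ 2) (2 * y) y := by
      simpa using (hasDerivAt_pow 2 y).const_add (x ^ 2)
    have h2 : HasDerivAt (fun y : ℝ => (x - 1) ^ 2 + y ^ 2) (2 * y) y := by
      simpa using (hasDerivAt_pow 2 y).const_add ((x - 1) ^ 2)
    exact (h1.rpow_const (Or.inl (by positivity))).sub
      (h2.rpow_const (Or.inl (by positivity)))
  apply antitoneOn_of_deriv_nonpos (convex_Ici 0)
  · apply ContinuousOn.sub
    · exact (continuousOn_const.add (continuousOn_pow 2)).rpow_const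
        (fun y _ => Or.inr (by linarith))
    · exact (continuousOn_const.add (continuousOn_pow 2)).rpow_const
        (fun y _ => Or.inr (by positivity))
  · intro y hy
    rw [interior_Ici] at hy
    exact (hderiv y hy).differentiableAt.differentiableWithinAt
  · intro y hy
    rw [interior_Ici] at hy
    rw [(hderiv y hy).deriv]
    have hy0 : 0 < y := hy
    have hle : (x - 1) ^ 2 + y ^ 2 ≤ x ^ 2 + y ^ 2 := by nlinarith
    have hpos : (0:ℝ) < (x - 1) ^ 2 + y ^ 2 := by positivity
    have h := Real.rpow_le_rpow_of_nonpos hpos hle (by linarith : p / 2 - 1 ≤ 0)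
    have hfac : (0:ℝ) ≤ 2 * y * (p / 2) := by positivity
    have := mul_le_mul_of_nonneg_left h hfac
    linarith
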